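/- Let D be a Gauss diagram and D' a diagram obtained from D by deleting a subset of its chords. Then the bridge number of D' is at most the bridge number of D (with the convention that a diagram with no tails has bridge number 1). -/

import Mathlib

/-- Number of starting points of maximal cyclic runs of tail-labeled points in a
cyclic sequence of head/tail labels (`true` = tail, `false` = head): position `i`
starts a tail run when it carries a tail and its cyclic predecessor carries a head. -/
def tailRunStarts (l : List Bool) : ℕ :=
  ((List.range l.length).filter fun i =>
    l.getD i false = true ∧ l.getD ((i + (l.length - 1)) % l.length) false = false).length

/-- The bridge number of a cyclic sequence of endpoint labels, with the convention
that a diagram with no tail/head alternation (e.g. no chords) has bridge number 1. -/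
def bridgeNum (l : List Bool) : ℕ :=
  if tailRunStarts l = 0 then 1 else tailRunStarts l

/-- Deleting chords (removing their endpoints, hence passing to a subsequence of
the cyclic sequence of labeled endpoints) does not increase the bridge number. -/
def ft (a b : Bool) : ℕ := if a = false ∧ b = true then 1 else 0

def lin : List Bool → ℕ
  | a :: b :: t => ft a b + lin (b :: t)
  | _ => 0

lemma lin_single (a : Bool) : lin [a] = 0 := rfl

lemma lin_cons2 (a b : Bool) (t : List Bool) : lin (a :: b :: t) = ft a b + lin (b :: t) := rfl

lemma ft_tri (x a b : Bool) : ft x b ≤ ft x a + ft a b := by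
  cases x <;> cases a <;> cases b <;> simp [ft]

lemma lin_split (u : List Bool) (b : Bool) (v : List Bool) :
    lin (u ++ b :: v) = lin (u ++ [b]) + lin (b :: v) := by
  induction u with
  | nil =>
    show lin (b :: v) = lin [b] + lin (b :: v)
    rw [lin_single]; omega
  | cons a u ih =>
    cases u with
    | nil =>
      show lin (a :: b :: v) = lin [a, b] + lin (b :: v)
      rw [lin_cons2, lin_cons2, lin_single]
      omega
    | cons c u' =>
      simp only [List.cons_append] at ih ⊢
      rw [lin_cons2, lin_cons2, ih]
      omega

lemma lin_cons_le (x a : Bool) (m : List Bool) : lin (x :: m) ≤ lin (x :: a :: m) := by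
  cases m with
  | nil =>
    rw [lin_single, lin_cons2, lin_single]
    omega
  | cons b t =>
    rw [lin_cons2, lin_cons2, lin_cons2]
    have := ft_tri x a b
    omega

lemma lin_mono {s' s : List Bool} (h : s'.Sublist s) :
    ∀ x y : Bool, lin (x :: s' ++ [y]) ≤ lin (x :: s ++ [y]) := by
  induction h with
  | slnil => intro x y; exact le_rfl
  | cons a h ih =>
    intro x y
    refine (ih x y).trans ?_
    simp only [List.cons_append]
    exact lin_cons_le x a _
  | cons_cons a h ih =>
    intro x y
    simp only [List.cons_append, lin_cons2]
    have := ih a y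
    simp only [List.cons_append] at this
    omega

def ctrans : List Bool → ℕ
  | [] => 0
  | a :: t => lin (a :: t ++ [a])

lemma ctrans_cons_eq (a : Bool) (t : List Bool) : ctrans (a :: t) = lin (a :: t ++ [a]) := rfl

lemma ctrans_rot (u v : List Bool) : ctrans (u ++ v) = ctrans (v ++ u) := by
  cases u with
  | nil => simp
  | cons a u' =>
    cases v with
    | nil => simp
    | cons b v' =>
      show ctrans (a :: (u' ++ b :: v')) = ctrans (b :: (v' ++ a :: u'))
      rw [ctrans_cons_eq, ctrans_cons_eq]
      have h1 : a :: (u' ++ b :: v') ++ [a] = (a :: u') ++ b :: (v' ++ [a]) := by simp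
      have h2 : b :: (v' ++ a :: u') ++ [b] = (b :: v') ++ a :: (u' ++ [b]) := by simp
      rw [h1, h2, lin_split (a :: u') b (v' ++ [a]), lin_split (b :: v') a (u' ++ [b])]
      simp only [List.cons_append]
      omega

lemma ctrans_cons_ge (a : Bool) (m : List Bool) : ctrans m ≤ ctrans (a :: m) := by
  cases m with
  | nil => exact Nat.zero_le _
  | cons b t =>
    have hrot : ctrans (a :: b :: t) = ctrans ((b :: t) ++ [a]) := by
      have := ctrans_rot [a] (b :: t)
      simpa using this
    rw [hrot]
    have h1 : ctrans (b :: t) = lin (b :: t ++ [b]) := rfl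
    have h2 : ctrans ((b :: t) ++ [a]) = lin (b :: (t ++ [a]) ++ [b]) := by
      simp only [List.cons_append, ctrans_cons_eq]
    rw [h1, h2]
    exact lin_mono (List.sublist_append_left t [a]) b b

lemma ctrans_mono {l' l : List Bool} (h : l'.Sublist l) : ctrans l' ≤ ctrans l := by
  induction h with
  | slnil => exact le_rfl
  | cons a h ih => exact ih.trans (ctrans_cons_ge a _)
  | @cons_cons l₁ l₂ a h ih =>
    rw [ctrans_cons_eq, ctrans_cons_eq]
    exact lin_mono h a a

lemma count_lin (m : List Bool) :
    ((List.range m.length).filter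
      (fun j => decide (m.getD (j+1) false = true ∧ m.getD j false = false))).length = lin m := by
  induction m with
  | nil => rfl
  | cons a t ih =>
    cases t with
    | nil => simp [lin_single]
    | cons b t' =>
      have hr : List.range (a :: b :: t').length
          = 0 :: (List.range (b :: t').length).map (· + 1) := by
        simpa using List.range_succ_eq_map (n := (b :: t').length)
      have hcomp : ((fun j => decide ((a :: b :: t').getD (j+1) false = true ∧ (a :: b :: t').getD j false = false)) ∘ (· + 1))
          = fun j => decide ((b :: t').getD (j+1) false = true ∧ (b :: t').getD j false = false) := by
        funext j
        rfl
      rw [lin_cons2, ← ih, hr, List.filter_cons, List.filter_map, hcomp]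
      cases a <;> cases b <;> simp [ft] <;> omega

lemma getD_snoc (z : Bool) : ∀ s : List Bool, (s ++ [z]).getD s.length false = z := by
  intro s
  induction s with
  | nil => rfl
  | cons c s ih => exact ih

lemma ctrans_last (a : Bool) (t : List Bool) :
    lin ((a :: t).getD t.length false :: a :: t) = ctrans (a :: t) := by
  rcases t.eq_nil_or_concat with rfl | ⟨s, z, rfl⟩
  · rfl
  · simp only [List.concat_eq_append]
    have hlen : (s ++ [z]).length = s.length + 1 := by simp
    have hlast : (a :: (s ++ [z])).getD (s ++ [z]).length false = z := by
      rw [hlen, List.getD_cons_succ]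
      exact getD_snoc z s
    rw [hlast, ctrans_cons_eq]
    have h1 : z :: a :: (s ++ [z]) = [z] ++ a :: (s ++ [z]) := rfl
    have h2 : a :: (s ++ [z]) ++ [a] = (a :: s) ++ z :: [a] := by simp
    rw [h1, h2, lin_split [z] a (s ++ [z]), lin_split (a :: s) z [a]]
    simp only [List.cons_append, List.nil_append]
    omega

lemma tail_eq_ctrans (l : List Bool) : tailRunStarts l = ctrans l := by
  cases l with
  | nil => rfl
  | cons a t =>
    set z := (a :: t).getD t.length false with hz
    have n1 : (a :: t).length = t.length + 1 := rfl
    have hA : tailRunStarts (a :: t) =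
        ((List.range (t.length + 1)).filter
          (fun i => decide ((z :: a :: t).getD (i+1) false = true ∧ (z :: a :: t).getD i false = false))).length := by
      unfold tailRunStarts
      rw [n1]
      congr 1
      apply List.filter_congr
      intro i hi
      simp only [List.mem_range] at hi
      have hfst : (a :: t).getD i false = (z :: a :: t).getD (i+1) false := by
        simp [List.getD_cons_succ]
      have hsnd : (a :: t).getD ((i + (t.length + 1 - 1)) % (t.length + 1)) false
          = (z :: a :: t).getD i false := by
        simp only [Nat.add_sub_cancel]
        cases i with
        | zero =>
          have h1 : (0 + t.length) % (t.length + 1) = t.length := by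
            rw [Nat.zero_add, Nat.mod_eq_of_lt (by omega)]
          rw [h1, List.getD_cons_zero]
        | succ j =>
          have hj : j < t.length := by omega
          have h1 : (j + 1 + t.length) % (t.length + 1) = j := by
            rw [show j + 1 + t.length = j + (t.length + 1) by omega, Nat.add_mod_right,
              Nat.mod_eq_of_lt (by omega)]
          rw [h1]
          simp [List.getD_cons_succ]
      rw [hfst, hsnd]
    have hB : ((List.range (t.length + 1 + 1)).filter
          (fun i => decide ((z :: a :: t).getD (i+1) false = true ∧ (z :: a :: t).getD i false = false))).length
        = ((List.range (t.length + 1)).filter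
          (fun i => decide ((z :: a :: t).getD (i+1) false = true ∧ (z :: a :: t).getD i false = false))).length := by
      rw [List.range_succ, List.filter_append]
      have hd : ((z :: a :: t).getD (t.length + 1 + 1) false) = false := by
        apply List.getD_eq_default
        simp
      simp [hd]
    have hC := count_lin (z :: a :: t)
    simp only [List.length_cons] at hC
    rw [hA, ← hB, hC, hz]
    exact ctrans_last a t

theorem stmt9 (l l' : List Bool) (h : l'.Sublist l) :
    bridgeNum l' ≤ bridgeNum l := by
  have key : tailRunStarts l' ≤ tailRunStarts l := by
    rw [tail_eq_ctrans, tail_eq_ctrans]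
    exact ctrans_mono h
  unfold bridgeNum
  split_ifs with h1 h2 <;> omega
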